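/- Let k be a field of characteristic zero, d ≥ 1 an integer, and σ a k-algebra automorphism of the formal power series ring k[[X]] with σ^d = id. Then there exist ζ ∈ k with ζ^d = 1 and a uniformizer v of k[[X]] such that σ(v) = ζ·v (exactly, not merely modulo m²). -/

import Mathlib

open PowerSeries

section Aux
variable {k : Type*} [Field k]

lemma lin_map_C (τ : PowerSeries k ≃ₐ[k] PowerSeries k) (c : k) :
    τ (C c) = C c := by
  rw [C_eq_algebraMap]; exact τ.commutes c

lemma lin_const_zero (τ : PowerSeries k ≃ₐ[k] PowerSeries k) (f : PowerSeries k)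
    (hf : constantCoeff f = 0) : constantCoeff (τ f) = 0 := by
  by_contra h
  have hu : IsUnit (τ f) := by
    rw [PowerSeries.isUnit_iff_constantCoeff]
    exact isUnit_iff_ne_zero.mpr h
  have hf' : IsUnit f := by
    have := hu.map τ.symm.toAlgHom
    simpa using this
  rw [PowerSeries.isUnit_iff_constantCoeff, hf] at hf'
  exact hf'.ne_zero rfl

lemma lin_const_eq (τ : PowerSeries k ≃ₐ[k] PowerSeries k) (f : PowerSeries k) :
    constantCoeff (τ f) = constantCoeff f := by
  have h := lin_const_zero τ (f - C (constantCoeff f)) (by simp)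
  rw [map_sub, map_sub, lin_map_C] at h
  simp only [constantCoeff_C] at h
  exact sub_eq_zero.mp h

lemma lin_coeff_one (τ : PowerSeries k ≃ₐ[k] PowerSeries k) (f : PowerSeries k)
    (hf : constantCoeff f = 0) :
    coeff 1 (τ f) = coeff 1 (τ X) * coeff 1 f := by
  obtain ⟨g, hg⟩ := (PowerSeries.X_dvd_iff).mpr hf
  obtain ⟨w, hw⟩ := (PowerSeries.X_dvd_iff).mpr (lin_const_zero τ X (by simp))
  have h1 : τ f = X * (w * τ g) := by
    rw [hg, map_mul, hw]; ring
  rw [h1, hg]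
  have e1 : coeff 1 (X * (w * τ g)) = constantCoeff w * constantCoeff (τ g) := by
    rw [show (1 : ℕ) = 0 + 1 from rfl, coeff_succ_X_mul]
    simp [coeff_zero_eq_constantCoeff]
  have e2 : coeff 1 (τ X) = constantCoeff w := by
    rw [hw, show (1 : ℕ) = 0 + 1 from rfl, coeff_succ_X_mul]
    simp [coeff_zero_eq_constantCoeff]
  have e3 : coeff 1 ((X : PowerSeries k) * g) = constantCoeff g := by
    rw [show (1 : ℕ) = 0 + 1 from rfl, coeff_succ_X_mul]
    simp [coeff_zero_eq_constantCoeff]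
  rw [e1, e2, e3, lin_const_eq]
end Aux

/-- linearization of a finite-order automorphism. If `char k = 0`,
`d ≥ 1` and `σ` is a `k`-algebra automorphism of `k⟦X⟧` with `σ^d = id`, then
there exist `ζ ∈ k` with `ζ^d = 1` and a uniformizer `v` with `σ v = ζ·v` exactly. -/
theorem finite_order_automorphism_linearizable {k : Type*} [Field k] [CharZero k]
    (d : ℕ) (hd : 1 ≤ d) (σ : PowerSeries k ≃ₐ[k] PowerSeries k)
    (hσd : σ ^ d = 1) :
    ∃ (ζ : k) (v : PowerSeries k), ζ ^ d = 1 ∧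
      constantCoeff v = 0 ∧ coeff 1 v ≠ 0 ∧ σ v = C ζ * v := by
  set a : k := coeff 1 (σ X) with ha
  have hmul : ∀ (i : ℕ) (f : PowerSeries k), (σ ^ (i + 1)) f = σ ((σ ^ i) f) := by
    intro i f
    rw [pow_succ']
    rfl
  have hconst : ∀ i : ℕ, constantCoeff ((σ ^ i) X) = 0 := by
    intro i
    induction i with
    | zero => simp
    | succ n ih =>
      rw [hmul]
      exact lin_const_zero σ _ ih
  have hc1 : ∀ i : ℕ, coeff 1 ((σ ^ i) X) = a ^ i := by
    intro i
    induction i with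
    | zero => simp
    | succ n ih =>
      rw [hmul, lin_coeff_one σ _ (hconst n), ih, ← ha, pow_succ]
      ring
  have had : a ^ d = 1 := by
    have := hc1 d
    rw [hσd] at this
    simpa using this.symm
  have ha0 : a ≠ 0 := by
    intro h
    rw [h, zero_pow (by omega)] at had
    exact zero_ne_one had
  -- the averaged uniformizer
  set v : PowerSeries k :=
    ∑ i ∈ Finset.range d, C (a⁻¹ ^ i) * (σ ^ i) X with hv
  refine ⟨a, v, had, ?_, ?_, ?_⟩
  · rw [hv, map_sum]
    apply Finset.sum_eq_zero
    intro i _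
    rw [map_mul, hconst i, mul_zero]
  · rw [hv, map_sum]
    have : ∀ i ∈ Finset.range d, coeff 1 (C (a⁻¹ ^ i) * (σ ^ i) X) = 1 := by
      intro i _
      rw [coeff_C_mul, hc1 i, inv_pow, inv_mul_cancel₀ (pow_ne_zero i ha0)]
    rw [Finset.sum_congr rfl this]
    simp only [Finset.sum_const, Finset.card_range, nsmul_eq_mul, mul_one]
    exact_mod_cast Nat.cast_ne_zero.mpr (by omega)
  · -- σ v = C a * v
    set F : ℕ → PowerSeries k := fun j => C (a * a⁻¹ ^ j) * (σ ^ j) X with hF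
    have hFd : F d = F 0 := by
      simp only [hF, hσd, pow_zero, mul_one, inv_pow, had, inv_one]
    have step : σ v = ∑ i ∈ Finset.range d, F (i + 1) := by
      rw [hv, map_sum]
      apply Finset.sum_congr rfl
      intro i _
      rw [map_mul, lin_map_C, ← hmul]
      simp only [hF]
      congr 2
      rw [pow_succ]
      field_simp
    rw [step]
    have : ∑ i ∈ Finset.range d, F (i + 1)
        = (∑ i ∈ Finset.range (d + 1), F i) - F 0 := by
      rw [Finset.sum_range_succ']
      ring
    rw [this, Finset.sum_range_succ, hFd]
    have : (∑ i ∈ Finset.range d, F i) + F 0 - F 0 = ∑ i ∈ Finset.range d, F i := by ring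
    rw [this, hv, Finset.mul_sum]
    apply Finset.sum_congr rfl
    intro i _
    rw [hF, ← mul_assoc, ← map_mul]
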